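/- Let M be an m×m subgenerator matrix, m⃗ = -M·1 the associated nonnegative exit column vector, and for a subprobability row vector η let G(η) = M + m⃗ η. If η and η' are subprobability vectors with η ≤ η' componentwise, then for every x ≥ 0 the matrix exponentials satisfy e^{x G(η)} ≤ e^{x G(η')} entrywise. -/

import Mathlib

open Matrix

private lemma pow_entry_mono {m : ℕ} {A B : Matrix (Fin m) (Fin m) ℝ}
    (hA : ∀ i j, 0 ≤ A i j) (hAB : ∀ i j, A i j ≤ B i j) (n : ℕ) :
    ∀ i j, 0 ≤ (A ^ n) i j ∧ (A ^ n) i j ≤ (B ^ n) i j := by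
  induction n with
  | zero =>
    intro i j
    by_cases h : i = j <;> simp [pow_zero, Matrix.one_apply, h]
  | succ n ih =>
    intro i j
    rw [pow_succ, pow_succ, Matrix.mul_apply, Matrix.mul_apply]
    constructor
    · exact Finset.sum_nonneg fun k _ => mul_nonneg (ih i k).1 (hA k j)
    · refine Finset.sum_le_sum fun k _ => ?_
      exact mul_le_mul (ih i k).2 (hAB k j) (hA k j) ((ih i k).1.trans (ih i k).2)

private lemma exp_entry_hasSum {m : ℕ} (X : Matrix (Fin m) (Fin m) ℝ) (i j : Fin m) :
    HasSum (fun n : ℕ => ((Nat.factorial n : ℝ))⁻¹ * (X ^ n) i j) (NormedSpace.exp X i j) := by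
  letI : SeminormedRing (Matrix (Fin m) (Fin m) ℝ) := Matrix.linftyOpSemiNormedRing
  letI : NormedRing (Matrix (Fin m) (Fin m) ℝ) := Matrix.linftyOpNormedRing
  letI : NormedAlgebra ℝ (Matrix (Fin m) (Fin m) ℝ) := Matrix.linftyOpNormedAlgebra
  have h := NormedSpace.exp_series_hasSum_exp' (𝕂 := ℝ) X
  set L : Matrix (Fin m) (Fin m) ℝ →ₗ[ℝ] ℝ :=
    (LinearMap.proj (R := ℝ) (φ := fun _ : Fin m => ℝ) j).comp (LinearMap.proj (φ := fun _ : Fin m => Fin m → ℝ) i) with hL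
  have hcont : Continuous L := L.continuous_of_finiteDimensional
  have h2 := h.map L hcont
  have hLapp : ∀ Y : Matrix (Fin m) (Fin m) ℝ, L Y = Y i j := fun _ => rfl
  simp only [Function.comp_def, hLapp, Matrix.smul_apply, smul_eq_mul] at h2
  convert h2 using 1
  rfl

private lemma exp_entry_le {m : ℕ} {A B : Matrix (Fin m) (Fin m) ℝ}
    (hA : ∀ i j, 0 ≤ A i j) (hAB : ∀ i j, A i j ≤ B i j) (i j : Fin m) :
    NormedSpace.exp A i j ≤ NormedSpace.exp B i j := by
  refine hasSum_le (fun n => ?_) (exp_entry_hasSum A i j) (exp_entry_hasSum B i j)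
  exact mul_le_mul_of_nonneg_left ((pow_entry_mono hA hAB n i j).2)
    (by positivity)

private lemma exp_shift {m : ℕ} (X : Matrix (Fin m) (Fin m) ℝ) (c : ℝ) :
    NormedSpace.exp X
      = Real.exp (-c) • NormedSpace.exp (X + c • (1 : Matrix (Fin m) (Fin m) ℝ)) := by
  letI : SeminormedRing (Matrix (Fin m) (Fin m) ℝ) := Matrix.linftyOpSemiNormedRing
  letI : NormedRing (Matrix (Fin m) (Fin m) ℝ) := Matrix.linftyOpNormedRing
  letI : NormedAlgebra ℝ (Matrix (Fin m) (Fin m) ℝ) := Matrix.linftyOpNormedAlgebra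
  letI : NormedAlgebra ℚ (Matrix (Fin m) (Fin m) ℝ) := NormedAlgebra.restrictScalars ℚ ℝ _
  have hX : X = (X + c • (1 : Matrix (Fin m) (Fin m) ℝ)) + (-c) • 1 := by
    rw [add_assoc, ← add_smul]
    simp
  have hcomm : Commute (X + c • (1 : Matrix (Fin m) (Fin m) ℝ)) ((-c) • 1) :=
    (Commute.one_right _).smul_right (-c)
  have hexp1 : NormedSpace.exp ((-c) • (1 : Matrix (Fin m) (Fin m) ℝ))
      = Real.exp (-c) • 1 := by
    rw [← Algebra.algebraMap_eq_smul_one]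
    erw [← NormedSpace.algebraMap_exp_comm]
    rw [← Real.exp_eq_exp_ℝ, Algebra.algebraMap_eq_smul_one]
  calc NormedSpace.exp X
      = NormedSpace.exp ((X + c • (1 : Matrix (Fin m) (Fin m) ℝ)) + (-c) • 1) := by
        rw [← hX]
    _ = NormedSpace.exp (X + c • (1 : Matrix (Fin m) (Fin m) ℝ))
          * NormedSpace.exp ((-c) • (1 : Matrix (Fin m) (Fin m) ℝ)) :=
        NormedSpace.exp_add_of_commute hcomm
    _ = Real.exp (-c) • NormedSpace.exp (X + c • (1 : Matrix (Fin m) (Fin m) ℝ)) := by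
        rw [hexp1, Matrix.mul_smul, mul_one]

/-- If `M` is a subgenerator matrix with exit vector `m⃗ = -M·1` and
`η ≤ η'` are subprobability row vectors, then for every `x ≥ 0` the matrix exponentials
of the rank-one updates `G(η) = M + m⃗η` satisfy `e^{xG(η)} ≤ e^{xG(η')}` entrywise. -/
theorem exp_monotone_in_eta (m : ℕ) (M : Matrix (Fin m) (Fin m) ℝ)
    (hoff : ∀ i j, i ≠ j → 0 ≤ M i j)
    (hrow : ∀ i, ∑ j, M i j ≤ 0)
    (mvec : Fin m → ℝ) (hm : mvec = (-M) *ᵥ (fun _ => 1))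
    (η η' : Fin m → ℝ)
    (hη : (∀ i, 0 ≤ η i) ∧ ∑ i, η i ≤ 1)
    (hη' : (∀ i, 0 ≤ η' i) ∧ ∑ i, η' i ≤ 1)
    (hle : ∀ i, η i ≤ η' i)
    (x : ℝ) (hx : 0 ≤ x) :
    ∀ i j, NormedSpace.exp (x • (M + vecMulVec mvec η)) i j
      ≤ NormedSpace.exp (x • (M + vecMulVec mvec η')) i j := by
  intro i j
  set A := x • (M + vecMulVec mvec η) with hAdef
  set B := x • (M + vecMulVec mvec η') with hBdef
  have hmv : ∀ k, 0 ≤ mvec k := by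
    intro k
    rw [hm]
    simp only [Matrix.mulVec, dotProduct, Matrix.neg_apply, mul_one]
    rw [Finset.sum_neg_distrib]
    linarith [hrow k]
  have hAB : ∀ i j, A i j ≤ B i j := by
    intro i j
    simp only [hAdef, hBdef, Matrix.smul_apply, Matrix.add_apply, Matrix.vecMulVec_apply,
      smul_eq_mul]
    have : mvec i * η j ≤ mvec i * η' j :=
      mul_le_mul_of_nonneg_left (hle j) (hmv i)
    nlinarith
  have hAoff : ∀ i j, i ≠ j → 0 ≤ A i j := by
    intro i j hij
    simp only [hAdef, Matrix.smul_apply, Matrix.add_apply, Matrix.vecMulVec_apply, smul_eq_mul]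
    have h1 : 0 ≤ M i j := hoff i j hij
    have h2 : 0 ≤ mvec i * η j := mul_nonneg (hmv i) (hη.1 j)
    nlinarith
  set c := ∑ k, |A k k| with hcdef
  have hc : ∀ k, |A k k| ≤ c := by
    intro k
    exact Finset.single_le_sum (f := fun k => |A k k|) (fun _ _ => abs_nonneg _)
      (Finset.mem_univ k)
  have hA' : ∀ i j, 0 ≤ (A + c • (1 : Matrix (Fin m) (Fin m) ℝ)) i j := by
    intro i j
    by_cases h : i = j
    · subst h
      simp only [Matrix.add_apply, Matrix.smul_apply, Matrix.one_apply_eq, smul_eq_mul, mul_one]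
      have := hc i
      have := abs_nonneg (A i i)
      cases abs_cases (A i i) with
      | inl h' => linarith [h'.1]
      | inr h' => linarith [h'.1]
    · simp only [Matrix.add_apply, Matrix.smul_apply, Matrix.one_apply_ne h, smul_eq_mul,
        mul_zero, add_zero]
      exact hAoff i j h
  have hA'B' : ∀ i j, (A + c • (1 : Matrix (Fin m) (Fin m) ℝ)) i j
      ≤ (B + c • (1 : Matrix (Fin m) (Fin m) ℝ)) i j := by
    intro i j
    simp only [Matrix.add_apply]
    linarith [hAB i j]
  have key := exp_entry_le hA' hA'B' i j
  rw [exp_shift A c, exp_shift B c]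
  simp only [Matrix.smul_apply, smul_eq_mul]
  exact mul_le_mul_of_nonneg_left key (Real.exp_nonneg _)
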